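/- Let X = (x_k) be an ℝ-Leja sequence and 2^n + 1 < k ≤ 2^{n+1}. Set A = 𝓛_{2^n} and let B = {x_j : 2^n+1 ≤ j ≤ k−1}. Then for every x ∈ [−1,1] and b ∈ B: |w_A(x)| / |w_A(b)| ≤ 1 / sin(π/2^{n+1}), where w_A(y) = ∏_{a∈A}(y − a). -/

import Mathlib

open Finset Real

/-- A Leja sequence for the unit disk `D = {|z| ≤ 1}`: it starts at `1`, stays in `D`,
and each point maximizes the product of distances to the previous points over `D`. -/
def IsLejaSeq (e : ℕ → ℂ) : Prop :=
  e 0 = 1 ∧ (∀ k, ‖e k‖ ≤ 1) ∧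
    ∀ j, 1 ≤ j → ∀ z : ℂ, ‖z‖ ≤ 1 →
      ∏ m ∈ Finset.range j, ‖z - e m‖ ≤
        ∏ m ∈ Finset.range j, ‖e j - e m‖

/-- An ℝ-Leja sequence: the sequence of real parts of a Leja sequence for the unit
disk, with repeated values eliminated (keeping first occurrences, in order). -/
def IsRLejaSeq (x : ℕ → ℝ) : Prop :=
  ∃ (e : ℕ → ℂ) (φ : ℕ → ℕ), IsLejaSeq e ∧ StrictMono φ ∧
    (∀ k, x k = (e (φ k)).re) ∧
    ∀ m : ℕ, (m ∈ Set.range φ ↔ ∀ s, s < m → (e m).re ≠ (e s).re)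

/-- The Chebyshev–Lobatto points of degree `d`. -/
noncomputable def lobatto (d : ℕ) : Finset ℝ :=
  (Finset.range (d + 1)).image (fun j : ℕ => Real.cos (j * π / d))

section NodalAux
open Polynomial in

lemma prod_range_pow_sub (n : ℕ) (hn : n ≠ 0) (z : ℂ) :
    ∏ j ∈ Finset.range n, (z - Complex.exp (2 * Real.pi * Complex.I / n) ^ j) = z ^ n - 1 := by
  have hζ := Complex.isPrimitiveRoot_exp n hn
  set ζ := Complex.exp (2 * Real.pi * Complex.I / n)
  have himg : (Finset.range n).image (ζ ^ ·) = nthRootsFinset n (1 : ℂ) := by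
    apply Finset.eq_of_subset_of_card_le
    · intro w hw
      simp only [Finset.mem_image] at hw
      obtain ⟨j, _, rfl⟩ := hw
      exact (Polynomial.mem_nthRootsFinset (Nat.pos_of_ne_zero hn) (1 : ℂ)).2 (by
        rw [← pow_mul, mul_comm, pow_mul, hζ.pow_eq_one, one_pow])
    · rw [hζ.card_nthRootsFinset, Finset.card_image_of_injOn hζ.injOn_pow, Finset.card_range]
  have := Polynomial.X_pow_sub_one_eq_prod (Nat.pos_of_ne_zero hn) hζ
  have heval := congrArg (Polynomial.eval z) this
  simp only [eval_sub, eval_pow, eval_X, eval_one, eval_prod, eval_sub, eval_C] at heval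
  rw [heval, ← himg, Finset.prod_image (fun a ha b hb h => hζ.injOn_pow ha hb h)]


lemma re_eq {z : ℂ} (hz : ‖z‖ = 1) : ((z.re : ℝ) : ℂ) = (z + z⁻¹) / 2 := by
  have h1 : z * (starRingEnd ℂ) z = 1 := by
    rw [Complex.mul_conj]; norm_cast; rw [Complex.normSq_eq_norm_sq, hz, one_pow]
  have hc : (starRingEnd ℂ) z = z⁻¹ := eq_inv_of_mul_eq_one_right h1
  have := Complex.add_conj z
  rw [hc] at this
  rw [this]; push_cast; ring

lemma roots_prod (d : ℕ) (hd : 1 ≤ d) (z : ℂ) :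
    (∏ j ∈ Finset.range (d + 1), (z - Complex.exp (π * Complex.I / d) ^ j)) *
      (∏ j ∈ Finset.range (d + 1), (z - (Complex.exp (π * Complex.I / d))⁻¹ ^ j)) =
      (z ^ (2 * d) - 1) * (z ^ 2 - 1) := by
  set ω := Complex.exp (π * Complex.I / d) with hω
  have hd0 : (d : ℂ) ≠ 0 := Nat.cast_ne_zero.2 (by omega)
  have hωd : ω ^ d = -1 := by
    rw [hω, ← Complex.exp_nat_mul, mul_div_assoc']
    rw [mul_comm (d:ℂ), mul_div_assoc, div_self hd0, mul_one, Complex.exp_pi_mul_I]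
  have hω2d : ω ^ (2 * d) = 1 := by rw [pow_mul', hωd]; norm_num
  have hP2 : ∏ j ∈ Finset.range (d + 1), (z - ω⁻¹ ^ j) =
      ∏ j ∈ Finset.range (d + 1), (z - ω ^ (d + j)) := by
    rw [← Finset.prod_range_reflect]
    refine Finset.prod_congr rfl fun j hj => ?_
    simp only [Finset.mem_range] at hj
    have hj' : j ≤ d := by omega
    congr 1
    have he : d + 1 - 1 - j = d - j := by omega
    rw [he, inv_pow]
    have hmul : ω ^ (d - j) * ω ^ (d + j) = 1 := by
      rw [← pow_add]
      have : d - j + (d + j) = 2 * d := by omega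
      rw [this, hω2d]
    exact inv_eq_of_mul_eq_one_right hmul
  rw [hP2, Finset.prod_range_succ, Finset.prod_range_succ, hωd]
  have h2d : ω ^ (d + d) = 1 := by rw [← two_mul]; exact hω2d
  rw [h2d]
  have hsplit : (∏ j ∈ Finset.range d, (z - ω ^ j)) * ∏ j ∈ Finset.range d, (z - ω ^ (d + j)) =
      z ^ (2 * d) - 1 := by
    rw [← Finset.prod_range_add]
    have hcast : (2 * (π:ℝ) * Complex.I) / ((2 * d : ℕ) : ℂ) = π * Complex.I / d := by
      push_cast; field_simp
    have h := prod_range_pow_sub (2 * d) (by omega) z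
    rw [hcast] at h
    rw [two_mul] at h ⊢
    exact h
  linear_combination ((z + 1) * (z - 1)) * hsplit


lemma eq_neg_one_of_le (a : ℂ) (h1 : ‖a‖ ≤ 1) (h2 : 2 ≤ ‖a - 1‖) :
    a = -1 := by
  have hs1 : a.re ^ 2 + a.im ^ 2 ≤ 1 := by
    have := Complex.sq_norm a
    rw [Complex.normSq_apply] at this
    nlinarith [pow_le_one₀ (norm_nonneg a) h1 (n := 2)]
  have hs2 : 4 ≤ (a.re - 1) ^ 2 + a.im ^ 2 := by
    have := Complex.sq_norm (a - 1)
    rw [Complex.normSq_apply] at this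
    simp only [Complex.sub_re, Complex.sub_im, Complex.one_re, Complex.one_im, sub_zero] at this
    nlinarith [norm_nonneg (a - 1)]
  have hre : a.re = -1 := by nlinarith
  have him : a.im = 0 := by nlinarith [sq_nonneg a.im]
  apply Complex.ext <;> simp [hre, him]


def LejaPrefix (f : ℕ → ℂ) (L : ℕ) : Prop :=
  f 0 = 1 ∧ (∀ s, s < L → ‖f s‖ ≤ 1) ∧
    ∀ j, 1 ≤ j → j < L → ∀ z : ℂ, ‖z‖ ≤ 1 →
      ∏ m ∈ Finset.range j, ‖z - f m‖ ≤
        ∏ m ∈ Finset.range j, ‖f j - f m‖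

/-- helper: turn "level" info into `f m ^ 2^p = 1`. -/
lemma pow_eq_one_helper (f : ℕ → ℂ) (h0 : f 0 = 1) (p m : ℕ) (hm : m < 2 ^ p)
    (hstep : 1 ≤ m → f m ^ 2 ^ Nat.log 2 m = -1) : f m ^ 2 ^ p = 1 := by
  rcases Nat.eq_zero_or_pos m with rfl | hm1
  · rw [h0, one_pow]
  · have hq := hstep hm1
    set q := Nat.log 2 m with hqdef
    have hqp : q < p := by
      have := Nat.pow_log_le_self 2 (show m ≠ 0 by omega)
      rw [← hqdef] at this
      by_contra h
      push_neg at h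
      have : 2 ^ p ≤ 2 ^ q := Nat.pow_le_pow_right (by norm_num) h
      omega
    have : 2 ^ p = 2 ^ q * 2 * 2 ^ (p - q - 1) := by
      rw [← pow_succ, ← pow_add]
      congr 1
      omega
    rw [this, pow_mul, pow_mul, hq]
    norm_num


lemma real_pow_eq_one {a : ℝ} (ha : 0 ≤ a) {N : ℕ} (hN : N ≠ 0) (h : a ^ N = 1) : a = 1 := by
  rcases lt_trichotomy a 1 with h' | h' | h'
  · have := pow_lt_one₀ ha h' hN; linarith
  · exact h'
  · have := one_lt_pow₀ h' hN; linarith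

theorem leja_struct : ∀ (m : ℕ), 1 ≤ m → ∀ (f : ℕ → ℂ) (L : ℕ), LejaPrefix f L → m < L →
    f m ^ 2 ^ Nat.log 2 m = -1 ∧
    LejaPrefix (fun s => f (2 ^ Nat.log 2 m + s) / f (2 ^ Nat.log 2 m))
      (m - 2 ^ Nat.log 2 m + 1) ∧
    ∀ s, s < m → f s ≠ f m := by
  intro m
  induction m using Nat.strong_induction_on with
  | _ m IH =>
  intro hm1 f L hf hmL
  obtain ⟨h0, hb, hmax⟩ := hf
  set q := Nat.log 2 m with hqdef
  have hq1 : 2 ^ q ≤ m := Nat.pow_log_le_self 2 (by omega)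
  have hq2 : m < 2 ^ (q + 1) := Nat.lt_pow_succ_log_self (by norm_num) m
  have hq2' : m < 2 * 2 ^ q := by rw [← pow_succ']; exact hq2
  set t := m - 2 ^ q with htdef
  have htq : t < 2 ^ q := by omega
  have hmqt : m = 2 ^ q + t := by omega
  have hpow1 : ∀ s, s < 2 ^ q → f s ^ 2 ^ q = 1 := by
    intro s hs
    have hsm : s < m := by omega
    exact pow_eq_one_helper f h0 q s hs (fun hs1 => (IH s hsm hs1 f L ⟨h0, hb, hmax⟩ (by omega)).1)
  have hdist : ∀ s s', s < s' → s' < m → f s ≠ f s' := by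
    intro s s' hss hs'm
    exact fun h => (IH s' hs'm (by omega) f L ⟨h0, hb, hmax⟩ (by omega)).2.2 s hss h
  have hnodal : ∀ z : ℂ, ∏ s ∈ Finset.range (2 ^ q), (z - f s) = z ^ 2 ^ q - 1 := by
    intro z
    have hNe : (2 : ℕ) ^ q ≠ 0 := by positivity
    have hζ := Complex.isPrimitiveRoot_exp (2 ^ q) hNe
    have hinj : Set.InjOn f (Finset.range (2 ^ q)) := by
      intro a ha b hb' hab
      simp only [Finset.coe_range, Set.mem_Iio] at ha hb'
      by_contra hne
      rcases Nat.lt_or_ge a b with h | h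
      · exact hdist a b h (by omega) hab
      · exact hdist b a (by omega) (by omega) hab.symm
    have himg : (Finset.range (2 ^ q)).image f = Polynomial.nthRootsFinset (2 ^ q) (1 : ℂ) := by
      apply Finset.eq_of_subset_of_card_le
      · intro w hw
        simp only [Finset.mem_image] at hw
        obtain ⟨s, hs, rfl⟩ := hw
        simp only [Finset.mem_range] at hs
        exact (Polynomial.mem_nthRootsFinset (by positivity) (1 : ℂ)).2 (hpow1 s hs)
      · rw [hζ.card_nthRootsFinset, Finset.card_image_of_injOn hinj, Finset.card_range]
    have hX := Polynomial.X_pow_sub_one_eq_prod (n := 2 ^ q) (R := ℂ) (by positivity) hζ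
    have heval := congrArg (Polynomial.eval z) hX
    simp only [Polynomial.eval_sub, Polynomial.eval_pow, Polynomial.eval_X, Polynomial.eval_one,
      Polynomial.eval_prod, Polynomial.eval_C] at heval
    rw [heval, ← himg, Finset.prod_image (fun a ha b hb h => hinj ha hb h)]
  rcases Nat.eq_zero_or_pos t with ht0 | ht1
  · -- case m = 2^q
    have hm2q : m = 2 ^ q := by omega
    have habs : ∀ z : ℂ, ∏ s ∈ Finset.range m, ‖z - f s‖
        = ‖z ^ 2 ^ q - 1‖ := by
      intro z
      rw [← Complex.norm_prod]
      rw [show (Finset.range m) = Finset.range (2 ^ q) by rw [hm2q]]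
      rw [hnodal z]
    have hz₀abs : ‖(Complex.exp ((Real.pi / 2 ^ q : ℝ) * Complex.I))‖ = 1 :=
      Complex.norm_exp_ofReal_mul_I _
    have hz₀pow : (Complex.exp ((Real.pi / 2 ^ q : ℝ) * Complex.I)) ^ 2 ^ q = -1 := by
      rw [← Complex.exp_nat_mul]
      have hc : (2 ^ q : ℕ) * (((Real.pi / 2 ^ q : ℝ) : ℂ) * Complex.I)
          = (Real.pi : ℂ) * Complex.I := by
        have h2 : ((2 : ℂ) ^ q) ≠ 0 := pow_ne_zero q two_ne_zero
        push_cast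
        field_simp
      rw [hc, Complex.exp_pi_mul_I]
    have hle := hmax m hm1 hmL (Complex.exp ((Real.pi / 2 ^ q : ℝ) * Complex.I)) hz₀abs.le
    rw [habs, habs, hz₀pow] at hle
    have h2 : (2 : ℝ) ≤ ‖f m ^ 2 ^ q - 1‖ := by
      have : ‖(-1 - 1 : ℂ)‖ = 2 := by norm_num
      rw [this] at hle; exact hle
    have hfma : ‖f m ^ 2 ^ q‖ ≤ 1 := by
      rw [norm_pow]
      exact pow_le_one₀ (norm_nonneg _) (hb m hmL)
    have ha : f m ^ 2 ^ q = -1 := eq_neg_one_of_le _ hfma h2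
    have hfm0 : f (2 ^ q) ≠ 0 := by
      rw [← hm2q]
      intro h
      rw [h, zero_pow (by positivity)] at ha
      norm_num at ha
    refine ⟨ha, ?_, ?_⟩
    · have ht01 : t + 1 = 1 := by omega
      rw [ht01]
      refine ⟨by simp [div_self hfm0], ?_, ?_⟩
      · intro s hs
        have hs0 : s = 0 := by omega
        subst hs0
        simp [div_self hfm0]
      · intro j hj1 hj2
        omega
    · intro s hsm h
      have hsp : f s ^ 2 ^ q = 1 := hpow1 s (by omega)
      rw [h, ha] at hsp
      norm_num at hsp
  · -- main case
    have hρneg : f (2 ^ q) ^ 2 ^ q = -1 := by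
      have := (IH (2 ^ q) (by omega) Nat.one_le_two_pow f L ⟨h0, hb, hmax⟩ (by omega)).1
      rwa [Nat.log_pow (by norm_num)] at this
    set ρ := f (2 ^ q) with hρdef
    have hρabs : ‖ρ‖ = 1 := by
      apply real_pow_eq_one (norm_nonneg ρ) (show 2 ^ q ≠ 0 by positivity)
      rw [← norm_pow, hρneg]; norm_num
    have hρne : ρ ≠ 0 := by
      intro h; rw [h] at hρabs; simp at hρabs
    set g : ℕ → ℂ := fun s => f (2 ^ q + s) / ρ with hg
    -- previous structure
    have hlogm1 : Nat.log 2 (m - 1) = q := Nat.log_eq_of_pow_le_of_lt_pow (by omega) (by omega)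
    have hprev := IH (m - 1) (by omega) (by omega) f L ⟨h0, hb, hmax⟩ (by omega)
    rw [hlogm1] at hprev
    have hgleja : LejaPrefix g t := by
      have : m - 1 - 2 ^ q + 1 = t := by omega
      rw [this] at hprev
      exact hprev.2.1
    -- each previous new point
    have hfneg : ∀ s, s < t → f (2 ^ q + s) ^ 2 ^ q = -1 := by
      intro s hs
      rcases Nat.eq_zero_or_pos s with rfl | hs1
      · simpa using hρneg
      · have hlog : Nat.log 2 (2 ^ q + s) = q :=
          Nat.log_eq_of_pow_le_of_lt_pow (by omega) (by omega)
        have := (IH (2 ^ q + s) (by omega) (by omega) f L ⟨h0, hb, hmax⟩ (by omega)).1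
        rwa [hlog] at this
    have hgpow : ∀ s, s < t → g s ^ 2 ^ q = 1 := by
      intro s hs
      simp only [hg, div_pow]
      rw [hfneg s hs, hρneg]
      norm_num
    have hgabs : ∀ s, s < t → ‖g s‖ = 1 := by
      intro s hs
      apply real_pow_eq_one (norm_nonneg _) (show 2 ^ q ≠ 0 by positivity)
      rw [← norm_pow, hgpow s hs]; norm_num
    -- maximizer of G on the closed disk
    set G : ℂ → ℝ := fun u => ∏ s ∈ Finset.range t, ‖u - g s‖ with hG
    have hGc : Continuous G := by
      apply continuous_finset_prod
      intro s _
      exact continuous_norm.comp (continuous_id.sub continuous_const)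
    have hGnonneg : ∀ u, 0 ≤ G u := fun u => Finset.prod_nonneg fun s _ => norm_nonneg _
    obtain ⟨u₀, hu₀mem, hu₀max⟩ := (isCompact_closedBall (0 : ℂ) 1).exists_isMaxOn
      ⟨0, by simp⟩ hGc.continuousOn
    have hmem : ∀ u : ℂ, ‖u‖ ≤ 1 → u ∈ Metric.closedBall (0 : ℂ) 1 := by
      intro u hu
      rw [Metric.mem_closedBall, Complex.dist_eq]
      simpa using hu
    have hu₀abs : ‖u₀‖ ≤ 1 := by
      have := Metric.mem_closedBall.1 hu₀mem
      rw [Complex.dist_eq] at this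
      simpa using this
    have hu₀m : ∀ u, ‖u‖ ≤ 1 → G u ≤ G u₀ := fun u hu => hu₀max (hmem u hu)
    -- extended prefix
    set gE : ℕ → ℂ := fun s => if s = t then u₀ else g s with hgE
    have hgEleja : LejaPrefix gE (t + 1) := by
      refine ⟨?_, ?_, ?_⟩
      · simp only [hgE, hg, if_neg (by omega : (0:ℕ) ≠ t)]
        simp [div_self hρne]
        exact div_self hρne
      · intro s hs
        rcases eq_or_ne s t with rfl | hst
        · simpa [hgE] using hu₀abs
        · simp only [hgE, if_neg hst]
          rw [hgabs s (by omega)]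
      · intro j hj1 hj2 z hz
        have hfac : ∀ w : ℂ, ∏ s ∈ Finset.range j, ‖w - gE s‖
            = ∏ s ∈ Finset.range j, ‖w - g s‖ := by
          intro w
          refine Finset.prod_congr rfl fun s hs => ?_
          simp only [Finset.mem_range] at hs
          simp only [hgE, if_neg (by omega : s ≠ t)]
        rw [hfac, hfac]
        rcases Nat.lt_or_ge j t with hjt | hjt
        · have := hgleja.2.2 j hj1 hjt z hz
          simpa only [hgE, if_neg (by omega : j ≠ t)] using this
        · have hjt' : j = t := by omega
          subst hjt'
          simp only [hgE, if_pos rfl]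
          exact hu₀m z hz
    have hu₀neg := (IH t (by omega) ht1 gE (t + 1) hgEleja (by omega)).1
    have hu₀negt : u₀ ^ 2 ^ Nat.log 2 t = -1 := by
      simpa only [hgE, if_pos rfl] using hu₀neg
    have hu₀pow : u₀ ^ 2 ^ q = 1 := by
      have hq' : Nat.log 2 t < q := Nat.log_lt_of_lt_pow (by omega) htq
      have hsplit : 2 ^ q = 2 ^ Nat.log 2 t * 2 * 2 ^ (q - Nat.log 2 t - 1) := by
        rw [← pow_succ, ← pow_add]
        congr 1
        omega
      rw [hsplit, pow_mul, pow_mul, hu₀negt]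
      norm_num
    have hG0 : (1 : ℝ) ≤ G u₀ := by
      have h1 : G 0 = 1 := by
        simp only [hG, zero_sub, norm_neg]
        rw [Finset.prod_congr rfl fun s hs => hgabs s (Finset.mem_range.1 hs)]
        simp
      have := hu₀m 0 (by simp)
      rw [h1] at this
      exact this
    have hGpos : (0 : ℝ) < G u₀ := lt_of_lt_of_le one_pos hG0
    -- factorization of the nodal product
    have hW : ∀ z : ℂ, ∏ s ∈ Finset.range (2 ^ q + t), ‖z - f s‖
        = ‖z ^ 2 ^ q - 1‖ * G (z / ρ) := by
      intro z
      rw [Finset.prod_range_add]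
      congr 1
      · rw [← Complex.norm_prod, hnodal z]
      · refine Finset.prod_congr rfl fun s hs => ?_
        have hzf : z - f (2 ^ q + s) = ρ * (z / ρ - g s) := by
          simp only [hg]
          field_simp
        rw [hzf, norm_mul, hρabs, one_mul]
    have habsfm : ‖f m‖ ≤ 1 := hb m hmL
    have hle := hmax m hm1 hmL (ρ * u₀) (by rw [norm_mul, hρabs, one_mul]; exact hu₀abs)
    rw [show Finset.range m = Finset.range (2 ^ q + t) by rw [← hmqt]] at hle
    rw [hW, hW] at hle
    have hρu₀ : (ρ * u₀) ^ 2 ^ q = -1 := by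
      rw [mul_pow, hρneg, hu₀pow, mul_one]
    rw [hρu₀] at hle
    rw [show ρ * u₀ / ρ = u₀ by field_simp] at hle
    have habs2 : ‖(-1 - 1 : ℂ)‖ = 2 := by norm_num
    rw [habs2] at hle
    -- hle : 2 * G u₀ ≤ abs (f m ^ 2^q - 1) * G (f m / ρ)
    have hfmρ : ‖f m / ρ‖ ≤ 1 := by
      rw [norm_div, hρabs, div_one]; exact habsfm
    have hGfm : G (f m / ρ) ≤ G u₀ := hu₀m _ hfmρ
    have h2le : (2 : ℝ) ≤ ‖f m ^ 2 ^ q - 1‖ := by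
      by_contra hcon
      push_neg at hcon
      have : ‖f m ^ 2 ^ q - 1‖ * G (f m / ρ) < 2 * G u₀ := by
        apply lt_of_le_of_lt (b := ‖f m ^ 2 ^ q - 1‖ * G u₀)
        · exact mul_le_mul_of_nonneg_left hGfm (norm_nonneg _)
        · exact mul_lt_mul_of_pos_right hcon hGpos
      linarith
    have ha : f m ^ 2 ^ q = -1 := by
      apply eq_neg_one_of_le _ _ h2le
      rw [norm_pow]
      exact pow_le_one₀ (norm_nonneg _) habsfm
    have hGmax : ∀ u, ‖u‖ ≤ 1 → G u ≤ G (f m / ρ) := by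
      intro u hu
      have : 2 * G u₀ ≤ 2 * G (f m / ρ) := by
        rw [ha, habs2] at hle
        exact hle
      have h' : G u₀ ≤ G (f m / ρ) := by linarith
      exact le_trans (hu₀m u hu) h'
    have hgt : g t = f m / ρ := by simp only [hg]; rw [← hmqt]
    have hgfull : LejaPrefix g (t + 1) := by
      refine ⟨?_, ?_, ?_⟩
      · simp only [hg]; simp [div_self hρne]; exact div_self hρne
      · intro s hs
        rcases Nat.lt_or_ge s t with hst | hst
        · rw [hgabs s hst]
        · have : s = t := by omega
          subst this
          rw [hgt]
          exact hfmρ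
      · intro j hj1 hj2 z hz
        rcases Nat.lt_or_ge j t with hjt | hjt
        · exact hgleja.2.2 j hj1 hjt z hz
        · have : j = t := by omega
          subst this
          have h1 : ∏ s ∈ Finset.range t, ‖z - g s‖ ≤ G (f m / ρ) := hGmax z hz
          rw [hgt]
          exact h1
    refine ⟨ha, hgfull, ?_⟩
    intro s hsm h
    rcases Nat.lt_or_ge s (2 ^ q) with hs2q | hs2q
    · have hsp : f s ^ 2 ^ q = 1 := hpow1 s hs2q
      rw [h, ha] at hsp
      norm_num at hsp
    · have hs' : s = 2 ^ q + (s - 2 ^ q) := by omega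
      have hst : s - 2 ^ q < t := by omega
      have hne := (IH t (by omega) ht1 g (t + 1) hgfull (by omega)).2.2 (s - 2 ^ q) hst
      apply hne
      have e1 : g (s - 2 ^ q) = f s / ρ := by
        simp only [hg]
        rw [show 2 ^ q + (s - 2 ^ q) = s by omega]
      rw [e1, hgt, h]


lemma lobatto_prod (d : ℕ) (hd : 1 ≤ d) (z : ℂ) (hz : ‖z‖ = 1) :
    ((∏ a ∈ lobatto d, (z.re - a) : ℝ) : ℂ) =
      (z ^ (2 * d) - 1) * (z ^ 2 - 1) / (2 * z) ^ (d + 1) := by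
  have hd0 : (d : ℝ) ≠ 0 := Nat.cast_ne_zero.2 (by omega)
  have hz0 : z ≠ 0 := by intro h; rw [h] at hz; simp at hz
  have hinj : Set.InjOn (fun j : ℕ => Real.cos (j * π / d)) (Finset.range (d + 1)) := by
    intro a ha b hb hab
    simp only [Finset.coe_range, Set.mem_Iio] at ha hb
    have hmem : ∀ c : ℕ, c < d + 1 → (c * π / d : ℝ) ∈ Set.Icc 0 π := by
      intro c hc
      constructor
      · positivity
      · rw [div_le_iff₀ (by positivity : (0:ℝ) < d)]
        have : (c : ℝ) ≤ d := by exact_mod_cast Nat.lt_succ_iff.1 hc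
        nlinarith [Real.pi_pos]
    have := Real.injOn_cos (hmem a ha) (hmem b hb) hab
    have hπ : π ≠ 0 := Real.pi_ne_zero
    field_simp at this
    exact_mod_cast this
  rw [lobatto, Finset.prod_image hinj, Complex.ofReal_prod]
  have hfac : ∀ j : ℕ, j < d + 1 → ((z.re - Real.cos (j * π / d) : ℝ) : ℂ) =
      (z - Complex.exp (π * Complex.I / d) ^ j) *
        (z - (Complex.exp (π * Complex.I / d))⁻¹ ^ j) / (2 * z) := by
    intro j hj
    rw [Complex.ofReal_sub]
    have hexp : Complex.exp (π * Complex.I / d) ^ j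
        = Complex.exp (((j * π / d : ℝ) : ℂ) * Complex.I) := by
      rw [← Complex.exp_nat_mul]
      congr 1
      push_cast
      field_simp
    have hexpinv : (Complex.exp (π * Complex.I / d))⁻¹ ^ j
        = Complex.exp (-((j * π / d : ℝ) : ℂ) * Complex.I) := by
      rw [← Complex.exp_neg, ← Complex.exp_nat_mul]
      congr 1
      push_cast
      field_simp
    rw [hexp, hexpinv]
    have hcos : ((Real.cos (j * π / d) : ℝ) : ℂ) =
        (Complex.exp (((j * π / d : ℝ) : ℂ) * Complex.I) +
          Complex.exp (-((j * π / d : ℝ) : ℂ) * Complex.I)) / 2 := by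
      rw [Complex.ofReal_cos, Complex.cos]
    have hre := re_eq hz
    set a := Complex.exp (((j * π / d : ℝ) : ℂ) * Complex.I) with ha
    have ha0 : a ≠ 0 := Complex.exp_ne_zero _
    have hainv : Complex.exp (-((j * π / d : ℝ) : ℂ) * Complex.I) = a⁻¹ := by
      rw [← Complex.exp_neg]
      congr 1
      ring
    rw [hainv] at hcos ⊢
    rw [hre, hcos]
    field_simp
    ring
  rw [Finset.prod_congr rfl (fun j hj => hfac j (Finset.mem_range.1 hj))]
  rw [Finset.prod_div_distrib, Finset.prod_mul_distrib, Finset.prod_const, Finset.card_range]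
  rw [roots_prod d hd z]


lemma abs_sq_sub_one_ge (N : ℕ) (hN : 1 ≤ N) (e : ℂ) (he : e ^ (2 * N) = -1) :
    2 * Real.sin (π / (2 * N)) ≤ ‖e ^ 2 - 1‖ := by
  have hN0 : (N : ℝ) ≠ 0 := Nat.cast_ne_zero.2 (by omega)
  have hNpos : (0:ℝ) < N := by positivity
  set ζ := e ^ 2 with hζ
  have hζN : ζ ^ N = -1 := by rw [hζ, ← pow_mul]; exact he
  have habs : ‖ζ‖ = 1 := by
    apply real_pow_eq_one (norm_nonneg _) (show N ≠ 0 by omega)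
    rw [← norm_pow, hζN]; norm_num
  set θ := Complex.arg ζ with hθ
  have hθpi : |θ| ≤ π := Complex.abs_arg_le_pi ζ
  have hexp : Complex.exp ((θ : ℂ) * Complex.I) = ζ := by
    have := Complex.norm_mul_exp_arg_mul_I ζ
    rwa [habs, Complex.ofReal_one, one_mul] at this
  -- N θ = π + 2 π τ
  have hNθ : Complex.exp (((N * θ : ℝ) : ℂ) * Complex.I) = -1 := by
    rw [show (((N * θ : ℝ)) : ℂ) * Complex.I = (N : ℕ) * ((θ:ℂ) * Complex.I) by push_cast; ring,
      Complex.exp_nat_mul, hexp, hζN]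
  have hpi : Complex.exp ((π : ℂ) * Complex.I) = -1 := Complex.exp_pi_mul_I
  have hiff := Complex.exp_eq_exp_iff_exists_int.1 (hNθ.trans hpi.symm)
  obtain ⟨τ, hτ⟩ := hiff
  have hreal : (N : ℝ) * θ = π + τ * (2 * π) := by
    have := congrArg Complex.im hτ
    simpa using this
  have hθlb : π / N ≤ |θ| := by
    have h1 : (N:ℝ) * |θ| = |π + τ * (2*π)| := by
      rw [← hreal, abs_mul, abs_of_pos hNpos]
    have h2 : π ≤ |π + τ * (2*π)| := by
      have : π + τ * (2*π) = (2*τ + 1) * π := by ring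
      rw [this, abs_mul]
      have : (1:ℝ) ≤ |(2*τ + 1 : ℝ)| := by
        have hne : (2*τ + 1 : ℤ) ≠ 0 := by omega
        have h3 : (1:ℤ) ≤ |2*τ + 1| := Int.one_le_abs hne
        calc (1:ℝ) ≤ ((|2*τ+1| : ℤ) : ℝ) := by exact_mod_cast h3
          _ = |(2*τ+1 : ℝ)| := by push_cast; ring
      rw [abs_of_pos Real.pi_pos]
      nlinarith [Real.pi_pos]
    rw [div_le_iff₀ hNpos, mul_comm]
    linarith [h1 ▸ h2]
  -- |ζ - 1| = 2 |sin (θ/2)|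
  have h2Isin : ∀ w : ℂ, 2 * Complex.I * Complex.sin w
      = Complex.exp (w * Complex.I) - Complex.exp (-w * Complex.I) := by
    intro w
    rw [Complex.sin]
    linear_combination (Complex.exp (-w * Complex.I) - Complex.exp (w * Complex.I)) * Complex.I_sq
  have hfact : ζ - 1 = Complex.exp (((θ/2 : ℝ) : ℂ) * Complex.I) *
      (2 * Complex.I * Complex.sin ((θ/2 : ℝ) : ℂ)) := by
    rw [h2Isin]
    rw [mul_sub, ← Complex.exp_add, ← Complex.exp_add]
    rw [show (((θ/2:ℝ)):ℂ) * Complex.I + (((θ/2:ℝ)):ℂ) * Complex.I = (θ:ℂ) * Complex.I by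
      push_cast; ring]
    rw [show (((θ/2:ℝ)):ℂ) * Complex.I + -(((θ/2:ℝ)):ℂ) * Complex.I = 0 by ring,
      Complex.exp_zero, hexp]
  have habsfact : ‖ζ - 1‖ = 2 * |Real.sin (θ/2)| := by
    rw [hfact, norm_mul, Complex.norm_exp_ofReal_mul_I, one_mul, norm_mul, norm_mul]
    rw [← Complex.ofReal_sin, Complex.norm_real, Real.norm_eq_abs]
    simp
  -- monotonicity
  have hsin : Real.sin (π / (2*N)) ≤ |Real.sin (θ/2)| := by
    have habsθ : |Real.sin (θ/2)| = Real.sin (|θ|/2) := by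
      rcases le_or_gt 0 θ with h | h
      · rw [abs_of_nonneg h, abs_of_nonneg]
        exact Real.sin_nonneg_of_nonneg_of_le_pi (by linarith) (by rw [abs_of_nonneg h] at hθpi; linarith)
      · rw [abs_of_neg h, show -θ/2 = -(θ/2) by ring, Real.sin_neg, abs_of_nonpos]
        have : 0 ≤ Real.sin (-(θ/2)) := Real.sin_nonneg_of_nonneg_of_le_pi (by linarith)
          (by rw [abs_of_neg h] at hθpi; linarith)
        rw [Real.sin_neg] at this
        linarith
    rw [habsθ]
    have hmem1 : π / (2*N) ∈ Set.Icc (-(π/2)) (π/2) := by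
      constructor
      · have : 0 < π / (2*N) := by positivity
        nlinarith [Real.pi_pos]
      · rw [div_le_div_iff₀ (by positivity) (by norm_num)]
        have hN1 : (1:ℝ) ≤ N := by exact_mod_cast hN
        nlinarith [Real.pi_pos]
    have hmem2 : |θ|/2 ∈ Set.Icc (-(π/2)) (π/2) := by
      constructor
      · have : 0 ≤ |θ| := abs_nonneg θ
        nlinarith [Real.pi_pos]
      · linarith
    have hle : π / (2*N) ≤ |θ|/2 := by
      rw [div_le_div_iff₀ (by positivity) (by norm_num)]
      calc π * 2 = (π / N) * N * 2 := by field_simp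
        _ ≤ |θ| * N * 2 := by nlinarith [hθlb, hNpos]
        _ = |θ| * (2 * N) := by ring
    exact Real.strictMonoOn_sin.monotoneOn hmem1 hmem2 hle
  calc 2 * Real.sin (π / (2*N)) ≤ 2 * |Real.sin (θ/2)| := by linarith
    _ = ‖ζ - 1‖ := habsfact.symm


lemma card_firstocc (v : ℕ → ℝ) (M : ℕ) :
    ((Finset.range M).filter (fun m => ∀ s < m, v m ≠ v s)).card
      = ((Finset.range M).image v).card := by
  apply Finset.card_bij (fun m _ => v m)
  · intro a ha
    simp only [Finset.mem_filter, Finset.mem_range] at ha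
    exact Finset.mem_image_of_mem v (Finset.mem_range.2 ha.1)
  · intro a ha b hb hab
    simp only [Finset.mem_filter, Finset.mem_range] at ha hb
    by_contra hne
    rcases Nat.lt_or_ge a b with h | h
    · exact hb.2 a h hab.symm
    · exact ha.2 b (by omega) hab
  · intro w hw
    simp only [Finset.mem_image, Finset.mem_range] at hw
    obtain ⟨s, hs, rfl⟩ := hw
    have hex : ∃ r, v r = v s := ⟨s, rfl⟩
    refine ⟨Nat.find hex, ?_, (Nat.find_spec hex)⟩
    simp only [Finset.mem_filter, Finset.mem_range]
    constructor
    · have : Nat.find hex ≤ s := Nat.find_le rfl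
      omega
    · intro r hr
      rw [Nat.find_spec hex]
      intro hcon
      exact Nat.find_min hex hr hcon.symm

lemma nthRoots_image (M : ℕ) (hM : M ≠ 0) :
    (Finset.range M).image (fun s => Complex.exp (2 * π * Complex.I / M) ^ s)
      = Polynomial.nthRootsFinset M (1 : ℂ) := by
  have hζ := Complex.isPrimitiveRoot_exp M hM
  apply Finset.eq_of_subset_of_card_le
  · intro w hw
    simp only [Finset.mem_image] at hw
    obtain ⟨j, _, rfl⟩ := hw
    exact (Polynomial.mem_nthRootsFinset (Nat.pos_of_ne_zero hM) (1 : ℂ)).2 (by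
      rw [← pow_mul, mul_comm j M, pow_mul, hζ.pow_eq_one, one_pow])
  · rw [hζ.card_nthRootsFinset, Finset.card_image_of_injOn hζ.injOn_pow, Finset.card_range]

lemma card_re_nthRoots (p : ℕ) (hp : 1 ≤ p) :
    ((Polynomial.nthRootsFinset (2 ^ p) (1 : ℂ)).image Complex.re).card = 2 ^ (p - 1) + 1 := by
  set M := 2 ^ p with hM
  have hM0 : M ≠ 0 := by positivity
  have hM2 : 2 ^ (p-1) * 2 = M := by
    rw [hM, ← pow_succ]
    congr 1
    omega
  rw [← nthRoots_image M hM0, Finset.image_image]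
  have hre : ∀ s : ℕ, (Complex.exp (2 * π * Complex.I / M) ^ s).re
      = Real.cos (2 * π * s / M) := by
    intro s
    rw [← Complex.exp_nat_mul]
    rw [show (s : ℂ) * (2 * π * Complex.I / M) = ((2 * π * s / M : ℝ) : ℂ) * Complex.I by
      push_cast; field_simp]
    exact Complex.exp_ofReal_mul_I_re _
  have hcomp : (Complex.re ∘ fun s : ℕ => Complex.exp (2 * π * Complex.I / M) ^ s)
      = fun s : ℕ => Real.cos (2 * π * s / M) := by
    funext s; exact hre s
  rw [hcomp]
  have himg : (Finset.range M).image (fun s : ℕ => Real.cos (2 * π * s / M))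
      = (Finset.range (2 ^ (p-1) + 1)).image (fun s : ℕ => Real.cos (2 * π * s / M)) := by
    apply Finset.Subset.antisymm
    · intro w hw
      simp only [Finset.mem_image, Finset.mem_range] at hw ⊢
      obtain ⟨s, hs, rfl⟩ := hw
      rcases Nat.lt_or_ge s (2 ^ (p-1) + 1) with h | h
      · exact ⟨s, h, rfl⟩
      · refine ⟨M - s, by omega, ?_⟩
        have hMs : ((M - s : ℕ) : ℝ) = (M : ℝ) - s := by
          push_cast [Nat.cast_sub (by omega : s ≤ M)]; ring
        rw [hMs]
        have hM0' : (M:ℝ) ≠ 0 := Nat.cast_ne_zero.2 hM0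
        rw [show 2 * π * ((M:ℝ) - s) / M = 2 * π - 2 * π * s / M by field_simp]
        rw [Real.cos_two_pi_sub]
    · apply Finset.image_subset_image
      intro s hs
      simp only [Finset.mem_range] at hs ⊢
      omega
  rw [himg, Finset.card_image_of_injOn, Finset.card_range]
  intro a ha b hb hab
  simp only [Finset.coe_range, Set.mem_Iio] at ha hb
  have hM0' : (0:ℝ) < (M:ℝ) := by positivity
  have hmem : ∀ c : ℕ, c < 2 ^ (p-1) + 1 → (2 * π * c / M : ℝ) ∈ Set.Icc 0 π := by
    intro c hc
    constructor
    · positivity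
    · rw [div_le_iff₀ hM0']
      have h1 : (c : ℝ) ≤ 2 ^ (p-1) := by exact_mod_cast Nat.lt_succ_iff.1 hc
      have h2 : (2 ^ (p-1) * 2 : ℝ) = (M : ℝ) := by exact_mod_cast hM2
      nlinarith [Real.pi_pos]
  have := Real.injOn_cos (hmem a ha) (hmem b hb) hab
  have hπ : π ≠ 0 := Real.pi_ne_zero
  field_simp at this
  exact_mod_cast this

end NodalAux

lemma isLejaSeq_prefix {e : ℕ → ℂ} (h : IsLejaSeq e) (L : ℕ) : LejaPrefix e L :=
  ⟨h.1, fun s _ => h.2.1 s, fun j hj _ z hz => h.2.2 j hj z hz⟩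

lemma leja_pow_one {e : ℕ → ℂ} {L : ℕ} (h : LejaPrefix e L) {p m : ℕ} (hm : m < 2 ^ p)
    (hmL : m < L) : e m ^ 2 ^ p = 1 :=
  pow_eq_one_helper e h.1 p m hm (fun h1 => (leja_struct m h1 e L h hmL).1)

lemma leja_neg_one {e : ℕ → ℂ} {L : ℕ} (h : LejaPrefix e L) {p m : ℕ} (h1 : 2 ^ p ≤ m)
    (h2 : m < 2 ^ (p + 1)) (hmL : m < L) : e m ^ 2 ^ p = -1 := by
  have hm1 : 1 ≤ m := le_trans Nat.one_le_two_pow h1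
  have := (leja_struct m hm1 e L h hmL).1
  rwa [Nat.log_eq_of_pow_le_of_lt_pow h1 h2] at this

lemma leja_ne {e : ℕ → ℂ} {L : ℕ} (h : LejaPrefix e L) {s m : ℕ} (hsm : s < m)
    (hmL : m < L) : e s ≠ e m :=
  (leja_struct m (by omega) e L h hmL).2.2 s hsm

lemma leja_image {e : ℕ → ℂ} (h : IsLejaSeq e) (p : ℕ) :
    (Finset.range (2 ^ p)).image e = Polynomial.nthRootsFinset (2 ^ p) (1 : ℂ) := by
  have hpre := isLejaSeq_prefix h (2 ^ p + 1)
  apply Finset.eq_of_subset_of_card_le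
  · intro w hw
    simp only [Finset.mem_image, Finset.mem_range] at hw
    obtain ⟨s, hs, rfl⟩ := hw
    exact (Polynomial.mem_nthRootsFinset (by positivity) (1 : ℂ)).2
      (leja_pow_one hpre hs (by omega))
  · have hinj : Set.InjOn e (Finset.range (2 ^ p)) := by
      intro a ha b hb hab
      simp only [Finset.coe_range, Set.mem_Iio] at ha hb
      by_contra hne
      rcases Nat.lt_or_ge a b with hlt | hge
      · exact leja_ne hpre hlt (by omega) hab
      · exact leja_ne hpre (by omega) (by omega) hab.symm
    rw [(Complex.isPrimitiveRoot_exp (2 ^ p) (by positivity)).card_nthRootsFinset,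
      Finset.card_image_of_injOn hinj, Finset.card_range]

lemma leja_filter_card {e : ℕ → ℂ} (h : IsLejaSeq e) (p : ℕ) (hp : 1 ≤ p) :
    ((Finset.range (2 ^ p)).filter (fun m => ∀ s < m, (e m).re ≠ (e s).re)).card
      = 2 ^ (p - 1) + 1 := by
  have h1 := card_firstocc (fun s => (e s).re) (2 ^ p)
  rw [h1]
  have h2 : (Finset.range (2 ^ p)).image (fun s => (e s).re)
      = ((Finset.range (2 ^ p)).image e).image Complex.re := by
    rw [Finset.image_image]
    rfl
  rw [h2, leja_image h p, card_re_nthRoots p hp]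


lemma abs_pow_sub_one_le (w : ℂ) (hw : ‖w‖ ≤ 1) : ‖w - 1‖ ≤ 2 := by
  have h := norm_add_le w (-1)
  rw [← sub_eq_add_neg] at h
  simp only [norm_neg, norm_one] at h
  linarith

theorem nodal_lobatto_quotient_bound (x : ℕ → ℝ) (hx : IsRLejaSeq x)
    (n k : ℕ) (hk1 : 2 ^ n + 1 < k) (hk2 : k ≤ 2 ^ (n + 1))
    (y : ℝ) (hy : y ∈ Set.Icc (-1 : ℝ) 1)
    (j : ℕ) (hj1 : 2 ^ n + 1 ≤ j) (hj2 : j ≤ k - 1) :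
    |∏ a ∈ lobatto (2 ^ n), (y - a)| / |∏ a ∈ lobatto (2 ^ n), (x j - a)| ≤
      1 / Real.sin (π / 2 ^ (n + 1)) := by
  obtain ⟨e, φ, hle, hφ, hxe, hrange⟩ := hx
  have hjub : j ≤ 2 ^ (n + 1) - 1 := by omega
  have hφlb : 2 ^ (n + 1) ≤ φ j := by
    by_contra hcon
    push_neg at hcon
    have hcard := leja_filter_card hle (n + 1) (by omega)
    have hsub : (Finset.range (j + 1)).image φ ⊆
        (Finset.range (2 ^ (n + 1))).filter (fun m => ∀ s < m, (e m).re ≠ (e s).re) := by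
      intro w hw
      simp only [Finset.mem_image, Finset.mem_range] at hw
      obtain ⟨i, hi, rfl⟩ := hw
      simp only [Finset.mem_filter, Finset.mem_range]
      constructor
      · have : φ i ≤ φ j := hφ.monotone (by omega)
        omega
      · intro s hs
        exact (hrange (φ i)).1 ⟨i, rfl⟩ s hs
    have hcardle := Finset.card_le_card hsub
    rw [Finset.card_image_of_injective _ hφ.injective, Finset.card_range, hcard] at hcardle
    simp only [Nat.add_sub_cancel] at hcardle
    omega
  have hφub : φ j < 2 ^ (n + 2) := by
    by_contra hcon
    push_neg at hcon
    have hcard := leja_filter_card hle (n + 2) (by omega)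
    have hsub : (Finset.range (2 ^ (n + 2))).filter (fun m => ∀ s < m, (e m).re ≠ (e s).re)
        ⊆ (Finset.range j).image φ := by
      intro w hw
      simp only [Finset.mem_filter, Finset.mem_range] at hw
      obtain ⟨i, rfl⟩ := (hrange w).2 hw.2
      have h1 : φ i < φ j := by omega
      exact Finset.mem_image_of_mem φ (Finset.mem_range.2 (hφ.lt_iff_lt.1 h1))
    have hcardle := Finset.card_le_card hsub
    have himle := Finset.card_image_le (s := Finset.range j) (f := φ)
    rw [Finset.card_range] at himle
    rw [hcard, show n + 2 - 1 = n + 1 from rfl] at hcardle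
    have : 2 ^ (n + 1) + 1 ≤ j := le_trans hcardle himle
    omega
  set m := φ j with hm
  have hpre := isLejaSeq_prefix hle (m + 1)
  have hneg : e m ^ 2 ^ (n + 1) = -1 := leja_neg_one hpre hφlb hφub (by omega)
  have habs1 : ‖e m‖ = 1 := by
    apply real_pow_eq_one (norm_nonneg _) (show 2 ^ (n + 1) ≠ 0 by positivity)
    rw [← norm_pow, hneg]
    norm_num
  have hd1 : 1 ≤ 2 ^ n := Nat.one_le_two_pow
  have htwo : 2 * 2 ^ n = 2 ^ (n + 1) := by rw [pow_succ]; ring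
  -- denominator
  have hxj : x j = (e m).re := hxe j
  have hden : |∏ a ∈ lobatto (2 ^ n), (x j - a)| =
      2 * ‖(e m) ^ 2 - 1‖ / 2 ^ (2 ^ n + 1) := by
    have hdenc := lobatto_prod (2 ^ n) hd1 (e m) habs1
    rw [hxj, ← Real.norm_eq_abs, ← Complex.norm_real, hdenc, norm_div, norm_mul, norm_pow, norm_mul,
      Complex.norm_two, habs1, mul_one, htwo, hneg]
    norm_num
  have hsinpos : 0 < Real.sin (π / 2 ^ (n + 1)) := by
    apply Real.sin_pos_of_pos_of_lt_pi
    · positivity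
    · have h1 : (1:ℝ) < 2 ^ (n + 1) := by
        have h2 : (2:ℝ) ^ 0 < 2 ^ (n + 1) := by
          apply pow_lt_pow_right₀ (by norm_num) (by omega)
        simpa using h2
      exact div_lt_self Real.pi_pos h1
  have hsin2 : 2 * Real.sin (π / 2 ^ (n + 1)) ≤ ‖(e m) ^ 2 - 1‖ := by
    have he2 : e m ^ (2 * 2 ^ n) = -1 := by rw [htwo]; exact hneg
    have := abs_sq_sub_one_ge (2 ^ n) hd1 (e m) he2
    have hcast : (π / (2 * ((2 ^ n : ℕ) : ℝ))) = π / 2 ^ (n + 1) := by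
      congr 1
      push_cast
      ring
    rwa [hcast] at this
  have hdenlb : 2 * (2 * Real.sin (π / 2 ^ (n + 1))) / 2 ^ (2 ^ n + 1) ≤
      |∏ a ∈ lobatto (2 ^ n), (x j - a)| := by
    rw [hden]
    gcongr
  -- numerator
  have h1my : 0 ≤ 1 - y ^ 2 := by nlinarith [hy.1, hy.2]
  set zy : ℂ := (y : ℂ) + (Real.sqrt (1 - y ^ 2) : ℝ) * Complex.I with hzy
  have hyre : zy.re = y := by
    simp [hzy]
  have habsy : ‖zy‖ = 1 := by
    apply real_pow_eq_one (norm_nonneg _) (show 2 ≠ 0 by norm_num)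
    rw [Complex.sq_norm, hzy, Complex.normSq_add_mul_I, Real.sq_sqrt h1my]
    ring
  have hnum : |∏ a ∈ lobatto (2 ^ n), (y - a)| =
      ‖zy ^ (2 * 2 ^ n) - 1‖ * ‖zy ^ 2 - 1‖ / 2 ^ (2 ^ n + 1) := by
    have hnumc := lobatto_prod (2 ^ n) hd1 zy habsy
    rw [show y = zy.re from hyre.symm, ← Real.norm_eq_abs, ← Complex.norm_real, hnumc, norm_div, norm_mul,
      norm_pow, norm_mul, Complex.norm_two, habsy, mul_one]
  have hnumub : |∏ a ∈ lobatto (2 ^ n), (y - a)| ≤ 2 * 2 / 2 ^ (2 ^ n + 1) := by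
    rw [hnum]
    gcongr
    · exact abs_pow_sub_one_le _ (by rw [norm_pow, habsy, one_pow])
    · exact abs_pow_sub_one_le _ (by rw [norm_pow, habsy, one_pow])
  -- combine
  have hkey : |∏ a ∈ lobatto (2 ^ n), (y - a)| / |∏ a ∈ lobatto (2 ^ n), (x j - a)| ≤
      (2 * 2 / 2 ^ (2 ^ n + 1)) / (2 * (2 * Real.sin (π / 2 ^ (n + 1))) / 2 ^ (2 ^ n + 1)) := by
    apply div_le_div₀ (by positivity) hnumub (by positivity) hdenlb
  have heq : (2 * 2 / 2 ^ (2 ^ n + 1) : ℝ) /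
      (2 * (2 * Real.sin (π / 2 ^ (n + 1))) / 2 ^ (2 ^ n + 1)) =
      1 / Real.sin (π / 2 ^ (n + 1)) := by
    have hS : Real.sin (π / 2 ^ (n + 1)) ≠ 0 := ne_of_gt hsinpos
    have hP : ((2:ℝ) ^ (2 ^ n + 1)) ≠ 0 := by positivity
    field_simp
  rw [heq] at hkey
  exact hkey
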